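/- If f : X^n → X and every pair of f-wild subsets of {1,...,n} has nonempty intersection, then f preserves T_1, i.e., for all binary almost unary functions g_1,...,g_n, the composite f(g_1,...,g_n) is almost unary. -/
import Mathlib


open Cardinal

/-- `A` is `(f,a)`-wild. -/
def WildFor {X : Type*} {n : ℕ} (f : (Fin n → X) → X) (A : Set (Fin n)) (a : Fin n → X) : Prop :=
  #{y : X | ∃ x : Fin n → X, (∀ i, i ∉ A → x i = a i) ∧ f x = y} = #X

/-- `A` is `f`-wild: `(f,a)`-wild for some `a`. -/
def Wild {X : Type*} {n : ℕ} (f : (Fin n → X) → X) (A : Set (Fin n)) : Prop :=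
  ∃ a : Fin n → X, WildFor f A a
/-- `f` is almost unary: bounded by a unary function of one fixed coordinate. -/
def AlmostUnary {X : Type*} [LT X] {n : ℕ} (f : (Fin n → X) → X) : Prop :=
  ∃ k : Fin n, ∃ F : X → X, ∀ x : Fin n → X, f x < F (x k)

lemma aux_pow_lt {κ a : Cardinal} (hκ : ℵ₀ ≤ κ) (ha : a < κ) :
    ∀ n : ℕ, a ^ (n : Cardinal) < κ := by
  intro n
  induction n with
  | zero => simpa using one_lt_aleph0.trans_le hκ
  | succ m ih =>
      rw [Nat.cast_succ, Cardinal.power_add, Cardinal.power_one]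
      exact Cardinal.mul_lt_of_lt hκ ih ha

lemma exists_strict_ub {X : Type*} [LinearOrder X]
    (hbdd : ∀ s : Set X, BddAbove s ↔ #s < #X) {s : Set X} (hs : #s < #X) :
    ∃ v : X, ∀ y ∈ s, y < v := by
  obtain ⟨u, hu⟩ := (hbdd s).mpr hs
  have h1 : #{x : X | x ≤ u} < #X := (hbdd _).mp ⟨u, fun x hx => hx⟩
  have h2 : {x : X | x ≤ u} ≠ Set.univ := by
    intro h
    rw [h, Cardinal.mk_univ] at h1
    exact lt_irrefl _ h1
  obtain ⟨v, hv⟩ : ∃ v : X, ¬ v ≤ u := by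
    by_contra hcon
    push_neg at hcon
    exact h2 (Set.eq_univ_of_forall hcon)
  exact ⟨v, fun y hy => lt_of_le_of_lt (hu hy) (lt_of_not_ge hv)⟩

/-- If every pair of `f`-wild sets meets, then `f` preserves `T₁`: composing `f` with
binary almost unary functions yields a binary almost unary function. -/
theorem preserves_T1_of_wild_intersect {X : Type*} [LinearOrder X] [WellFoundedLT X]
    (hreg : (#X).IsRegular) (hbdd : ∀ s : Set X, BddAbove s ↔ #s < #X)
    {n : ℕ} (f : (Fin n → X) → X)
    (hwild : ∀ A B : Set (Fin n), Wild f A → Wild f B → (A ∩ B).Nonempty) :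
    ∀ g : Fin n → ((Fin 2 → X) → X), (∀ i, AlmostUnary (g i)) →
      AlmostUnary (fun x : Fin 2 → X => f (fun i => g i x)) := by
  intro g hg
  have hg' : ∀ i, ∃ kk : Fin 2, ∃ FF : X → X, ∀ x, g i x < FF (x kk) := hg
  choose k F hkF using hg'
  have hκ0 : ℵ₀ ≤ #X := hreg.aleph0_le
  -- key lemma: a big slice in direction j makes {i | k i = j}ᶜ wild
  have key : ∀ (j : Fin 2) (c : X),
      #{y : X | ∃ x : Fin 2 → X, x j = c ∧ f (fun i => g i x) = y} = #X →
      Wild f ({i | k i = j}ᶜ) := by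
    intro j c hbig
    by_contra hw
    have hV : ∀ a : Fin n → X,
        #{y : X | ∃ x : Fin n → X, (∀ i, i ∉ ({i | k i = j}ᶜ : Set (Fin n)) → x i = a i)
          ∧ f x = y} < #X := by
      intro a
      refine lt_of_le_of_ne (Cardinal.mk_set_le _) ?_
      intro h
      exact hw ⟨a, h⟩
    have hfin : #(insert c (Set.range fun i => F i c) : Set X) < #X := by
      have hF : (insert c (Set.range fun i => F i c) : Set X).Finite :=
        (Set.finite_range _).insert c
      exact hF.lt_aleph0.trans_le hκ0
    obtain ⟨u, hu⟩ := (hbdd _).mpr hfin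
    have hcu : c ≤ u := hu (Set.mem_insert _ _)
    have hFu : ∀ i, F i c ≤ u := fun i => hu (Set.mem_insert_of_mem _ ⟨i, rfl⟩)
    have hιcard : #(Fin n → (Set.Iic u)) < #X := by
      have h1 : #(Set.Iic u) < #X := (hbdd _).mp ⟨u, fun x hx => hx⟩
      have h2 : #(Fin n → (Set.Iic u)) = (#(Set.Iic u)) ^ ((n : ℕ) : Cardinal) := by
        rw [Cardinal.mk_arrow]
        simp
      rw [h2]
      exact aux_pow_lt hκ0 h1 n
    have hcover : {y : X | ∃ x : Fin 2 → X, x j = c ∧ f (fun i => g i x) = y} ⊆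
        ⋃ t : (Fin n → (Set.Iic u)), {y : X | ∃ x : Fin n → X,
          (∀ i, i ∉ ({i | k i = j}ᶜ : Set (Fin n)) → x i = (fun i' => ((t i' : X))) i)
          ∧ f x = y} := by
      rintro y ⟨x, hxj, hfx⟩
      have hz : ∀ i, (if k i = j then g i x else c) ≤ u := by
        intro i
        by_cases hij : k i = j
        · rw [if_pos hij]
          refine le_of_lt (lt_of_lt_of_le ?_ (hFu i))
          have h3 := hkF i x
          rwa [hij, hxj] at h3
        · rw [if_neg hij]; exact hcu
      refine Set.mem_iUnion.mpr ⟨fun i => ⟨if k i = j then g i x else c, hz i⟩, ?_⟩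
      refine ⟨fun i => g i x, ?_, hfx⟩
      intro i hi
      simp only [Set.mem_compl_iff, Set.mem_setOf_eq, not_not] at hi
      simp [hi]
    have hsmall : #{y : X | ∃ x : Fin 2 → X, x j = c ∧ f (fun i => g i x) = y} < #X := by
      calc #{y : X | ∃ x : Fin 2 → X, x j = c ∧ f (fun i => g i x) = y}
          ≤ #(⋃ t : (Fin n → (Set.Iic u)), {y : X | ∃ x : Fin n → X,
              (∀ i, i ∉ ({i | k i = j}ᶜ : Set (Fin n)) → x i = (fun i' => ((t i' : X))) i)
              ∧ f x = y}) := Cardinal.mk_le_mk_of_subset hcover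
        _ ≤ Cardinal.sum (fun t : (Fin n → (Set.Iic u)) => #{y : X | ∃ x : Fin n → X,
              (∀ i, i ∉ ({i | k i = j}ᶜ : Set (Fin n)) → x i = (fun i' => ((t i' : X))) i)
              ∧ f x = y}) := Cardinal.mk_iUnion_le_sum_mk
        _ < #X := Cardinal.sum_lt_of_isRegular hreg hιcard (fun t => hV _)
    rw [hbig] at hsmall
    exact lt_irrefl _ hsmall
  have main : ∃ j : Fin 2, ∀ c : X,
      #{y : X | ∃ x : Fin 2 → X, x j = c ∧ f (fun i => g i x) = y} < #X := by
    by_contra hcon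
    push_neg at hcon
    have hbig : ∀ j : Fin 2, ∃ c : X,
        #{y : X | ∃ x : Fin 2 → X, x j = c ∧ f (fun i => g i x) = y} = #X := by
      intro j
      obtain ⟨c, hc⟩ := hcon j
      exact ⟨c, le_antisymm (Cardinal.mk_set_le _) hc⟩
    obtain ⟨c0, h0⟩ := hbig 0
    obtain ⟨c1, h1⟩ := hbig 1
    obtain ⟨i, hi⟩ := hwild _ _ (key 0 c0 h0) (key 1 c1 h1)
    obtain ⟨hi0, hi1⟩ := hi
    simp only [Set.mem_compl_iff, Set.mem_setOf_eq] at hi0 hi1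
    have h2 : (k i).val < 2 := (k i).isLt
    simp only [Fin.ext_iff, Fin.val_zero, Fin.val_one] at hi0 hi1
    omega
  obtain ⟨j, hsmall⟩ := main
  choose Fb hFb using fun c => exists_strict_ub hbdd (hsmall c)
  refine ⟨j, Fb, ?_⟩
  intro x
  exact hFb (x j) _ ⟨x, rfl, rfl⟩
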